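/- For any real s, the double series ∑_{n=1}^∞ 3^{n-1}·∑_{k=0}^∞ (2^{n-1}(2k+1))^{-s} of reciprocal eigenvalue powers (eigenvalues 2^{n-1}(2k+1) with multiplicity 3^{n-1}, over n ≥ 1, k ≥ 0) converges if and only if s > log 3/log 2. -/
import Mathlib
set_option maxHeartbeats 1000000

open Real

private lemma factor_eq (s : ℝ) (p : ℕ × ℕ) :
    (3 : ℝ) ^ p.1 * ((2 : ℝ) ^ p.1 * (2 * (p.2 : ℝ) + 1)) ^ (-s)
      = ((3 : ℝ) * (2 : ℝ) ^ (-s)) ^ p.1 * (2 * (p.2 : ℝ) + 1) ^ (-s) := by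
  have h2 : (0:ℝ) ≤ (2:ℝ) ^ p.1 := by positivity
  have hk : (0:ℝ) ≤ 2 * (p.2 : ℝ) + 1 := by positivity
  rw [Real.mul_rpow h2 hk, mul_pow]
  have : ((2:ℝ) ^ p.1) ^ (-s) = ((2:ℝ) ^ (-s)) ^ p.1 := by
    rw [← Real.rpow_natCast (2:ℝ) p.1, ← Real.rpow_natCast ((2:ℝ) ^ (-s)) p.1,
      ← Real.rpow_mul (by norm_num), ← Real.rpow_mul (by norm_num)]
    ring_nf
  rw [this]; ring

/-- The double series `∑_{n≥1} 3^{n-1} ∑_{k≥0} (2^{n-1}(2k+1))^{-s}` (eigenvalues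
`2^{n-1}(2k+1)` with multiplicity `3^{n-1}`) converges iff `s > log 3 / log 2`.
Here `p.1 = n-1` and `p.2 = k`. -/
theorem sierpinski_eigenvalue_summability (s : ℝ) :
    Summable (fun p : ℕ × ℕ =>
        (3 : ℝ) ^ p.1 * ((2 : ℝ) ^ p.1 * (2 * (p.2 : ℝ) + 1)) ^ (-s)) ↔
      Real.log 3 / Real.log 2 < s := by
  have hlog2 : (0:ℝ) < Real.log 2 := Real.log_pos (by norm_num)
  have hcond : Real.log 3 / Real.log 2 < s ↔ (3:ℝ) * (2:ℝ) ^ (-s) < 1 := by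
    rw [div_lt_iff₀ hlog2, Real.rpow_neg (by norm_num), mul_inv_lt_iff₀ (by positivity),
      one_mul, Real.lt_rpow_iff_log_lt (by norm_num) (by norm_num)]
  simp only [factor_eq s]
  constructor
  · intro hsum
    rw [hcond]
    have hinj : Function.Injective (fun n : ℕ => ((n, 0) : ℕ × ℕ)) := by
      intro a b h; simpa using congrArg Prod.fst h
    have h1 := hsum.comp_injective hinj
    simp only [Function.comp_def, Nat.cast_zero, mul_zero, zero_add, Real.one_rpow, mul_one,
      summable_geometric_iff_norm_lt_one, Real.norm_eq_abs,
      abs_of_pos (show (0:ℝ) < 3 * (2:ℝ) ^ (-s) by positivity)] at h1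
    exact h1
  · intro hs
    have hr : (3:ℝ) * (2:ℝ) ^ (-s) < 1 := hcond.mp hs
    have hs1 : 1 < s := by
      refine lt_of_lt_of_le ?_ hs.le
      rw [lt_div_iff₀ hlog2, one_mul]
      exact Real.log_lt_log (by norm_num) (by norm_num)
    have hg : Summable (fun n : ℕ => ((3:ℝ) * (2:ℝ) ^ (-s)) ^ n) :=
      summable_geometric_of_lt_one (by positivity) hr
    have hh : Summable (fun k : ℕ => (2 * (k : ℝ) + 1) ^ (-s)) := by
      have hbase : Summable (fun k : ℕ => ((k : ℝ) + 1) ^ (-s)) := by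
        have := (Real.summable_nat_rpow (p := -s)).mpr (by linarith)
        have h1 := (summable_nat_add_iff 1).mpr this
        simpa [Nat.cast_add, Nat.cast_one] using h1
      refine hbase.of_nonneg_of_le (fun k => by positivity) (fun k => ?_)
      exact Real.rpow_le_rpow_of_nonpos (by positivity) (by linarith) (by linarith)
    exact hg.mul_of_nonneg hh (fun n => by positivity) (fun k => by positivity)
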